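/- Let M be the real 12×12 matrix of the linear autonomous system, in the variables s = (U₁⁰⁰,U₁¹⁰,U₁⁰¹,U₁²⁰,U₁¹¹,U₁⁰²,U₂⁰⁰,U₂¹⁰,U₂⁰¹,U₂²⁰,U₂¹¹,U₂⁰²): U̇₁⁰⁰ = −U₁⁰⁰ − U₁¹⁰ − (2/3)U₁⁰² − U₂⁰¹ − (4/9)U₂¹¹; U̇₁¹⁰ = −U₁¹⁰ − U₁²⁰ − U₂¹¹; U̇₁⁰¹ = −U₁⁰¹ − U₁¹¹ − U₂⁰²; U̇₁²⁰ = −U₁²⁰; U̇₁¹¹ = −U₁¹¹; U̇₁⁰² = −U₁⁰²; U̇₂⁰⁰ = −3U₂⁰⁰ + (1/3)U₂¹⁰ − (8/27)U₂²⁰ − (4/9)U₁¹¹ − (1/3)U₁⁰¹; U̇₂¹⁰ = −3U₂¹⁰ + (1/3)U₂²⁰ − (1/3)U₁¹¹; U̇₂⁰¹ = −3U₂⁰¹ + (1/3)U₂¹¹ − (1/3)U₁⁰²; U̇₂²⁰ = −3U₂²⁰; U̇₂¹¹ = −3U₂¹¹; U̇₂⁰² = −3U₂⁰². Then the characteristic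 polynomial of M equals (X+1)⁶(X+3)⁶, and consequently for every γ ∈ (0,1) and every differentiable solution s : ℝ → ℝ¹² of s′ = Ms there exists C ≥ 0 such that ‖s(t)‖ ≤ C e^{−γt} for all t ≥ 0. -/

import Mathlib

open Polynomial

/-- The 12×12 coefficient matrix of the autonomous fast system, in the variables
`s = (U₁⁰⁰,U₁¹⁰,U₁⁰¹,U₁²⁰,U₁¹¹,U₁⁰²,U₂⁰⁰,U₂¹⁰,U₂⁰¹,U₂²⁰,U₂¹¹,U₂⁰²)`. -/
noncomputable def Mfast : Matrix (Fin 12) (Fin 12) ℝ :=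
  !![-1, -1, 0, 0, 0, -2/3, 0, 0, -1, 0, -4/9, 0;
     0, -1, 0, -1, 0, 0, 0, 0, 0, 0, -1, 0;
     0, 0, -1, 0, -1, 0, 0, 0, 0, 0, 0, -1;
     0, 0, 0, -1, 0, 0, 0, 0, 0, 0, 0, 0;
     0, 0, 0, 0, -1, 0, 0, 0, 0, 0, 0, 0;
     0, 0, 0, 0, 0, -1, 0, 0, 0, 0, 0, 0;
     0, 0, -1/3, 0, -4/9, 0, -3, 1/3, 0, -8/27, 0, 0;
     0, 0, 0, 0, -1/3, 0, 0, -3, 0, 1/3, 0, 0;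
     0, 0, 0, 0, 0, -1/3, 0, 0, -3, 0, 1/3, 0;
     0, 0, 0, 0, 0, 0, 0, 0, 0, -3, 0, 0;
     0, 0, 0, 0, 0, 0, 0, 0, 0, 0, -3, 0;
     0, 0, 0, 0, 0, 0, 0, 0, 0, 0, 0, -3]

/-- The permutation of coordinates putting `Mfast` in upper triangular form. -/
def sigmaPerm : Equiv.Perm (Fin 12) where
  toFun := ![0, 6, 8, 1, 2, 7, 3, 4, 5, 9, 10, 11]
  invFun := ![0, 3, 4, 6, 7, 8, 1, 5, 2, 9, 10, 11]
  left_inv := by decide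
  right_inv := by decide

/-- Scalar exponential decay lemma: a solution of `u' = a·u + f` with `a + γ < 0` and
`|f t| ≤ K e^{-γ t}` on `t ≥ 0` satisfies `|u t| ≤ C e^{-γ t}` on `t ≥ 0`. -/
lemma decay_aux {a γ K : ℝ} (hγ : 0 < γ) (hb : a + γ < 0) (hK : 0 ≤ K)
    {u f : ℝ → ℝ} (hu : ∀ t, HasDerivAt u (a * u t + f t) t)
    (hf : Continuous f)
    (hfb : ∀ t, 0 ≤ t → |f t| ≤ K * Real.exp (-γ * t)) :
    ∃ C, 0 ≤ C ∧ ∀ t, 0 ≤ t → |u t| ≤ C * Real.exp (-γ * t) := by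
  have hb0 : 0 < -(a + γ) := by linarith
  have key : ∀ t, HasDerivAt (fun τ => Real.exp (-a * τ) * u τ) (Real.exp (-a * t) * f t) t := by
    intro t
    have h1 : HasDerivAt (fun τ : ℝ => -a * τ) (-a) t := by
      simpa using (hasDerivAt_id t).const_mul (-a)
    have h2 := h1.exp.mul (hu t)
    refine h2.congr_deriv ?_
    ring
  have hcont : Continuous fun τ => Real.exp (-a * τ) * f τ :=
    (Real.continuous_exp.comp (continuous_const.mul continuous_id)).mul hf
  have hcont2 : Continuous fun τ => K * Real.exp (-(a + γ) * τ) :=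
    continuous_const.mul (Real.continuous_exp.comp (continuous_const.mul continuous_id))
  have ftc : ∀ t : ℝ, (∫ τ in (0:ℝ)..t, Real.exp (-a * τ) * f τ)
      = Real.exp (-a * t) * u t - Real.exp (-a * 0) * u 0 := fun t =>
    intervalIntegral.integral_eq_sub_of_hasDerivAt (fun τ _ => key τ)
      (hcont.intervalIntegrable 0 t)
  refine ⟨|u 0| + K / -(a + γ), by positivity, fun t ht => ?_⟩
  have hKb : 0 ≤ K / -(a + γ) := div_nonneg hK hb0.le
  have hder : ∀ τ ∈ Set.uIcc (0:ℝ) t,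
      HasDerivAt (fun σ : ℝ => K / -(a + γ) * Real.exp (-(a + γ) * σ))
        (K * Real.exp (-(a + γ) * τ)) τ := by
    intro τ _
    have h1 : HasDerivAt (fun σ : ℝ => -(a + γ) * σ) (-(a + γ)) τ := by
      simpa using (hasDerivAt_id τ).const_mul (-(a + γ))
    have h2 := h1.exp.const_mul (K / -(a + γ))
    refine h2.congr_deriv ?_
    have hne : (-γ + -a) ≠ 0 := by intro h0; nlinarith
    have hne2 : -(a + γ) ≠ 0 := ne_of_gt hb0
    rw [mul_comm (Real.exp _), ← mul_assoc, div_mul_cancel₀ _ hne2]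
  have hint := intervalIntegral.integral_eq_sub_of_hasDerivAt hder
    (hcont2.intervalIntegrable 0 t)
  have hae : ∀ᵐ τ ∂MeasureTheory.volume.restrict (Set.uIoc (0:ℝ) t),
      ‖Real.exp (-a * τ) * f τ‖ ≤ K * Real.exp (-(a + γ) * τ) := by
    refine (MeasureTheory.ae_restrict_mem measurableSet_uIoc).mono fun τ hτ => ?_
    have hτ0 : 0 ≤ τ := by
      rcases Set.mem_uIoc.1 hτ with h | h
      · exact le_of_lt h.1
      · linarith [h.1, ht]
    have hfτ := hfb τ hτ0
    have hpos := (Real.exp_pos (-a * τ)).le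
    rw [Real.norm_eq_abs, abs_mul, abs_of_pos (Real.exp_pos (-a * τ))]
    calc Real.exp (-a * τ) * |f τ| ≤ Real.exp (-a * τ) * (K * Real.exp (-γ * τ)) :=
          mul_le_mul_of_nonneg_left hfτ hpos
      _ = K * Real.exp (-(a + γ) * τ) := by
          rw [mul_comm, mul_assoc, ← Real.exp_add]; ring_nf
  have hcmp := intervalIntegral.norm_integral_le_abs_of_norm_le hae
    (hcont2.intervalIntegrable 0 t)
  rw [Real.norm_eq_abs, hint] at hcmp
  have h1 : |∫ τ in (0:ℝ)..t, Real.exp (-a * τ) * f τ|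
      ≤ K / -(a + γ) * Real.exp (-(a + γ) * t) := by
    have hx : Real.exp (-(a + γ) * 0) = 1 := by norm_num
    have h2 : (1:ℝ) ≤ Real.exp (-(a + γ) * t) := by
      rw [show (1:ℝ) = Real.exp 0 by simp]
      exact Real.exp_le_exp.2 (by nlinarith)
    rw [hx] at hcmp
    have h3 : |K / -(a + γ) * Real.exp (-(a + γ) * t) - K / -(a + γ) * 1|
        = K / -(a + γ) * Real.exp (-(a + γ) * t) - K / -(a + γ) * 1 := by
      rw [abs_of_nonneg]; nlinarith
    rw [h3] at hcmp
    nlinarith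
  have habs : |Real.exp (-a * t) * u t| ≤ |u 0| + K / -(a + γ) * Real.exp (-(a + γ) * t) := by
    have h0 : Real.exp (-a * t) * u t
        = Real.exp (-a * 0) * u 0 + ∫ τ in (0:ℝ)..t, Real.exp (-a * τ) * f τ := by
      rw [ftc t]; ring
    rw [h0]
    calc |Real.exp (-a * 0) * u 0 + ∫ τ in (0:ℝ)..t, Real.exp (-a * τ) * f τ|
        ≤ |Real.exp (-a * 0) * u 0| + |∫ τ in (0:ℝ)..t, Real.exp (-a * τ) * f τ| := abs_add_le _ _
      _ ≤ |u 0| + K / -(a + γ) * Real.exp (-(a + γ) * t) := by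
          rw [show (-a * 0 : ℝ) = 0 by ring, Real.exp_zero, one_mul]
          linarith
  have hu_eq : |u t| = Real.exp (a * t) * |Real.exp (-a * t) * u t| := by
    rw [abs_mul, abs_of_pos (Real.exp_pos (-a * t)), ← mul_assoc, ← Real.exp_add]
    norm_num
  have e1 : Real.exp (a * t) * Real.exp (-(a + γ) * t) = Real.exp (-γ * t) := by
    rw [← Real.exp_add]; ring_nf
  have e2 : Real.exp (a * t) ≤ Real.exp (-γ * t) := by
    apply Real.exp_le_exp.2
    nlinarith
  have hexp_pos := (Real.exp_pos (a * t)).le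
  rw [hu_eq]
  calc Real.exp (a * t) * |Real.exp (-a * t) * u t|
      ≤ Real.exp (a * t) * (|u 0| + K / -(a + γ) * Real.exp (-(a + γ) * t)) :=
        mul_le_mul_of_nonneg_left habs hexp_pos
    _ = |u 0| * Real.exp (a * t) + K / -(a + γ) * (Real.exp (a * t) * Real.exp (-(a + γ) * t)) := by
        ring
    _ = |u 0| * Real.exp (a * t) + K / -(a + γ) * Real.exp (-γ * t) := by rw [e1]
    _ ≤ (|u 0| + K / -(a + γ)) * Real.exp (-γ * t) := by
        have := mul_le_mul_of_nonneg_left e2 (abs_nonneg (u 0))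
        nlinarith

/-- The characteristic polynomial of the fast system's matrix is `(X+1)⁶(X+3)⁶`, and
consequently every solution of `s′ = Ms` decays like `e^{−γt}` for any `γ ∈ (0,1)`. -/
theorem fast_system_charpoly_and_decay :
    Mfast.charpoly = (X + 1) ^ 6 * (X + 3) ^ 6 ∧
    ∀ γ : ℝ, 0 < γ → γ < 1 →
      ∀ s : ℝ → Fin 12 → ℝ,
        (∀ t : ℝ, HasDerivAt s (Mfast.mulVec (s t)) t) →
        ∃ C : ℝ, 0 ≤ C ∧ ∀ t : ℝ, 0 ≤ t → ‖s t‖ ≤ C * Real.exp (-γ * t) := by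
  constructor
  · -- characteristic polynomial
    have htri : (Matrix.reindex sigmaPerm.symm sigmaPerm.symm Mfast).BlockTriangular id := by
      intro i j hij
      revert hij
      fin_cases i <;> fin_cases j <;> intro hij <;>
        first
          | rfl
          | exact absurd hij (by decide)
    rw [← Matrix.charpoly_reindex sigmaPerm.symm Mfast,
      Matrix.charpoly_of_upperTriangular _ htri]
    have hprod : (∏ i : Fin 12,
        (X - C ((Matrix.reindex sigmaPerm.symm sigmaPerm.symm Mfast) i i)))
        = (X - C (-1 : ℝ)) * ((X - C (-3 : ℝ)) * ((X - C (-3 : ℝ)) * ((X - C (-1 : ℝ)) *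
          ((X - C (-1 : ℝ)) * ((X - C (-3 : ℝ)) * ((X - C (-1 : ℝ)) * ((X - C (-1 : ℝ)) *
          ((X - C (-1 : ℝ)) * ((X - C (-3 : ℝ)) * ((X - C (-3 : ℝ)) * ((X - C (-3 : ℝ)) *
          1))))))))))) := rfl
    rw [hprod]
    simp only [map_neg, map_one, map_ofNat]
    ring
  · -- decay
    intro γ hγ0 hγ1 s hs
    have hcomp : ∀ (i : Fin 12) (t : ℝ),
        HasDerivAt (fun τ => s τ i) (Mfast.mulVec (s t) i) t :=
      fun i t => hasDerivAt_pi.1 (hs t) i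
    have hscont : ∀ i : Fin 12, Continuous fun t => s t i :=
      fun i => continuous_iff_continuousAt.2 fun t => (hcomp i t).continuousAt
    have hrow0 : ∀ v : Fin 12 → ℝ, Mfast.mulVec v 0 = -1 * v 0 + (-1 * v 1 + (0 * v 2 + (0 * v 3 + (0 * v 4 + (-2/3 * v 5 + (0 * v 6 + (0 * v 7 + (-1 * v 8 + (0 * v 9 + (-4/9 * v 10 + (0 * v 11 + 0))))))))))) := fun v => rfl
    have hrow1 : ∀ v : Fin 12 → ℝ, Mfast.mulVec v 1 = 0 * v 0 + (-1 * v 1 + (0 * v 2 + (-1 * v 3 + (0 * v 4 + (0 * v 5 + (0 * v 6 + (0 * v 7 + (0 * v 8 + (0 * v 9 + (-1 * v 10 + (0 * v 11 + 0))))))))))) := fun v => rfl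
    have hrow2 : ∀ v : Fin 12 → ℝ, Mfast.mulVec v 2 = 0 * v 0 + (0 * v 1 + (-1 * v 2 + (0 * v 3 + (-1 * v 4 + (0 * v 5 + (0 * v 6 + (0 * v 7 + (0 * v 8 + (0 * v 9 + (0 * v 10 + (-1 * v 11 + 0))))))))))) := fun v => rfl
    have hrow3 : ∀ v : Fin 12 → ℝ, Mfast.mulVec v 3 = 0 * v 0 + (0 * v 1 + (0 * v 2 + (-1 * v 3 + (0 * v 4 + (0 * v 5 + (0 * v 6 + (0 * v 7 + (0 * v 8 + (0 * v 9 + (0 * v 10 + (0 * v 11 + 0))))))))))) := fun v => rfl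
    have hrow4 : ∀ v : Fin 12 → ℝ, Mfast.mulVec v 4 = 0 * v 0 + (0 * v 1 + (0 * v 2 + (0 * v 3 + (-1 * v 4 + (0 * v 5 + (0 * v 6 + (0 * v 7 + (0 * v 8 + (0 * v 9 + (0 * v 10 + (0 * v 11 + 0))))))))))) := fun v => rfl
    have hrow5 : ∀ v : Fin 12 → ℝ, Mfast.mulVec v 5 = 0 * v 0 + (0 * v 1 + (0 * v 2 + (0 * v 3 + (0 * v 4 + (-1 * v 5 + (0 * v 6 + (0 * v 7 + (0 * v 8 + (0 * v 9 + (0 * v 10 + (0 * v 11 + 0))))))))))) := fun v => rfl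
    have hrow6 : ∀ v : Fin 12 → ℝ, Mfast.mulVec v 6 = 0 * v 0 + (0 * v 1 + (-1/3 * v 2 + (0 * v 3 + (-4/9 * v 4 + (0 * v 5 + (-3 * v 6 + (1/3 * v 7 + (0 * v 8 + (-8/27 * v 9 + (0 * v 10 + (0 * v 11 + 0))))))))))) := fun v => rfl
    have hrow7 : ∀ v : Fin 12 → ℝ, Mfast.mulVec v 7 = 0 * v 0 + (0 * v 1 + (0 * v 2 + (0 * v 3 + (-1/3 * v 4 + (0 * v 5 + (0 * v 6 + (-3 * v 7 + (0 * v 8 + (1/3 * v 9 + (0 * v 10 + (0 * v 11 + 0))))))))))) := fun v => rfl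
    have hrow8 : ∀ v : Fin 12 → ℝ, Mfast.mulVec v 8 = 0 * v 0 + (0 * v 1 + (0 * v 2 + (0 * v 3 + (0 * v 4 + (-1/3 * v 5 + (0 * v 6 + (0 * v 7 + (-3 * v 8 + (0 * v 9 + (1/3 * v 10 + (0 * v 11 + 0))))))))))) := fun v => rfl
    have hrow9 : ∀ v : Fin 12 → ℝ, Mfast.mulVec v 9 = 0 * v 0 + (0 * v 1 + (0 * v 2 + (0 * v 3 + (0 * v 4 + (0 * v 5 + (0 * v 6 + (0 * v 7 + (0 * v 8 + (-3 * v 9 + (0 * v 10 + (0 * v 11 + 0))))))))))) := fun v => rfl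
    have hrow10 : ∀ v : Fin 12 → ℝ, Mfast.mulVec v 10 = 0 * v 0 + (0 * v 1 + (0 * v 2 + (0 * v 3 + (0 * v 4 + (0 * v 5 + (0 * v 6 + (0 * v 7 + (0 * v 8 + (0 * v 9 + (-3 * v 10 + (0 * v 11 + 0))))))))))) := fun v => rfl
    have hrow11 : ∀ v : Fin 12 → ℝ, Mfast.mulVec v 11 = 0 * v 0 + (0 * v 1 + (0 * v 2 + (0 * v 3 + (0 * v 4 + (0 * v 5 + (0 * v 6 + (0 * v 7 + (0 * v 8 + (0 * v 9 + (0 * v 10 + (-3 * v 11 + 0))))))))))) := fun v => rfl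
    have hd3 : ∀ t, HasDerivAt (fun τ => s τ 3) ((-1) * s t 3 + (fun _ : ℝ => (0:ℝ)) t) t := by
      intro t
      have h := hcomp 3 t
      rw [hrow3] at h
      convert h using 1
      ring
    obtain ⟨C3, hC3, hB3⟩ := decay_aux (a := -1) hγ0 (by linarith) (le_refl (0:ℝ))
      hd3 continuous_const (fun t ht => by simp [Real.exp_nonneg])
    have hd4 : ∀ t, HasDerivAt (fun τ => s τ 4) ((-1) * s t 4 + (fun _ : ℝ => (0:ℝ)) t) t := by
      intro t
      have h := hcomp 4 t
      rw [hrow4] at h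
      convert h using 1
      ring
    obtain ⟨C4, hC4, hB4⟩ := decay_aux (a := -1) hγ0 (by linarith) (le_refl (0:ℝ))
      hd4 continuous_const (fun t ht => by simp [Real.exp_nonneg])
    have hd5 : ∀ t, HasDerivAt (fun τ => s τ 5) ((-1) * s t 5 + (fun _ : ℝ => (0:ℝ)) t) t := by
      intro t
      have h := hcomp 5 t
      rw [hrow5] at h
      convert h using 1
      ring
    obtain ⟨C5, hC5, hB5⟩ := decay_aux (a := -1) hγ0 (by linarith) (le_refl (0:ℝ))
      hd5 continuous_const (fun t ht => by simp [Real.exp_nonneg])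
    have hd9 : ∀ t, HasDerivAt (fun τ => s τ 9) ((-3) * s t 9 + (fun _ : ℝ => (0:ℝ)) t) t := by
      intro t
      have h := hcomp 9 t
      rw [hrow9] at h
      convert h using 1
      ring
    obtain ⟨C9, hC9, hB9⟩ := decay_aux (a := -3) hγ0 (by linarith) (le_refl (0:ℝ))
      hd9 continuous_const (fun t ht => by simp [Real.exp_nonneg])
    have hd10 : ∀ t, HasDerivAt (fun τ => s τ 10) ((-3) * s t 10 + (fun _ : ℝ => (0:ℝ)) t) t := by
      intro t
      have h := hcomp 10 t
      rw [hrow10] at h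
      convert h using 1
      ring
    obtain ⟨C10, hC10, hB10⟩ := decay_aux (a := -3) hγ0 (by linarith) (le_refl (0:ℝ))
      hd10 continuous_const (fun t ht => by simp [Real.exp_nonneg])
    have hd11 : ∀ t, HasDerivAt (fun τ => s τ 11) ((-3) * s t 11 + (fun _ : ℝ => (0:ℝ)) t) t := by
      intro t
      have h := hcomp 11 t
      rw [hrow11] at h
      convert h using 1
      ring
    obtain ⟨C11, hC11, hB11⟩ := decay_aux (a := -3) hγ0 (by linarith) (le_refl (0:ℝ))
      hd11 continuous_const (fun t ht => by simp [Real.exp_nonneg])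
    have hd1 : ∀ t, HasDerivAt (fun τ => s τ 1)
        ((-1) * s t 1 + (fun τ : ℝ => (-1) * s t 3 + (-1) * s t 10) t) t := by
      intro t
      have h := hcomp 1 t
      rw [hrow1] at h
      convert h using 1
      ring
    obtain ⟨C1, hC1, hB1⟩ := decay_aux (a := -1) (K := C3 + C10) hγ0 (by linarith)
      (by linarith) hd1 (((continuous_const).mul (hscont 3)).add ((continuous_const).mul (hscont 10))) (fun t ht => by
      obtain ⟨e3l, e3r⟩ := abs_le.1 (hB3 t ht)
      obtain ⟨e10l, e10r⟩ := abs_le.1 (hB10 t ht)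
      show |(-1) * s t 3 + (-1) * s t 10| ≤ (C3 + C10) * Real.exp (-γ * t)
      rw [abs_le]
      constructor <;> linarith [mul_nonneg hC3 (Real.exp_pos (-γ * t)).le, mul_nonneg hC10 (Real.exp_pos (-γ * t)).le])
    have hd2 : ∀ t, HasDerivAt (fun τ => s τ 2)
        ((-1) * s t 2 + (fun τ : ℝ => (-1) * s t 4 + (-1) * s t 11) t) t := by
      intro t
      have h := hcomp 2 t
      rw [hrow2] at h
      convert h using 1
      ring
    obtain ⟨C2, hC2, hB2⟩ := decay_aux (a := -1) (K := C4 + C11) hγ0 (by linarith)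
      (by linarith) hd2 (((continuous_const).mul (hscont 4)).add ((continuous_const).mul (hscont 11))) (fun t ht => by
      obtain ⟨e4l, e4r⟩ := abs_le.1 (hB4 t ht)
      obtain ⟨e11l, e11r⟩ := abs_le.1 (hB11 t ht)
      show |(-1) * s t 4 + (-1) * s t 11| ≤ (C4 + C11) * Real.exp (-γ * t)
      rw [abs_le]
      constructor <;> linarith [mul_nonneg hC4 (Real.exp_pos (-γ * t)).le, mul_nonneg hC11 (Real.exp_pos (-γ * t)).le])
    have hd7 : ∀ t, HasDerivAt (fun τ => s τ 7)
        ((-3) * s t 7 + (fun τ : ℝ => (-1/3) * s t 4 + (1/3) * s t 9) t) t := by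
      intro t
      have h := hcomp 7 t
      rw [hrow7] at h
      convert h using 1
      ring
    obtain ⟨C7, hC7, hB7⟩ := decay_aux (a := -3) (K := C4 + C9) hγ0 (by linarith)
      (by linarith) hd7 (((continuous_const).mul (hscont 4)).add ((continuous_const).mul (hscont 9))) (fun t ht => by
      obtain ⟨e4l, e4r⟩ := abs_le.1 (hB4 t ht)
      obtain ⟨e9l, e9r⟩ := abs_le.1 (hB9 t ht)
      show |(-1/3) * s t 4 + (1/3) * s t 9| ≤ (C4 + C9) * Real.exp (-γ * t)
      rw [abs_le]
      constructor <;> linarith [mul_nonneg hC4 (Real.exp_pos (-γ * t)).le, mul_nonneg hC9 (Real.exp_pos (-γ * t)).le])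
    have hd8 : ∀ t, HasDerivAt (fun τ => s τ 8)
        ((-3) * s t 8 + (fun τ : ℝ => (-1/3) * s t 5 + (1/3) * s t 10) t) t := by
      intro t
      have h := hcomp 8 t
      rw [hrow8] at h
      convert h using 1
      ring
    obtain ⟨C8, hC8, hB8⟩ := decay_aux (a := -3) (K := C5 + C10) hγ0 (by linarith)
      (by linarith) hd8 (((continuous_const).mul (hscont 5)).add ((continuous_const).mul (hscont 10))) (fun t ht => by
      obtain ⟨e5l, e5r⟩ := abs_le.1 (hB5 t ht)
      obtain ⟨e10l, e10r⟩ := abs_le.1 (hB10 t ht)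
      show |(-1/3) * s t 5 + (1/3) * s t 10| ≤ (C5 + C10) * Real.exp (-γ * t)
      rw [abs_le]
      constructor <;> linarith [mul_nonneg hC5 (Real.exp_pos (-γ * t)).le, mul_nonneg hC10 (Real.exp_pos (-γ * t)).le])
    have hd0 : ∀ t, HasDerivAt (fun τ => s τ 0)
        ((-1) * s t 0 + (fun τ : ℝ => (-1) * s t 1 + (-2/3) * s t 5 + (-1) * s t 8 + (-4/9) * s t 10) t) t := by
      intro t
      have h := hcomp 0 t
      rw [hrow0] at h
      convert h using 1
      ring
    obtain ⟨C0, hC0, hB0⟩ := decay_aux (a := -1) (K := C1 + C5 + C8 + C10) hγ0 (by linarith)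
      (by linarith) hd0 (((((continuous_const).mul (hscont 1)).add ((continuous_const).mul (hscont 5))).add ((continuous_const).mul (hscont 8))).add ((continuous_const).mul (hscont 10))) (fun t ht => by
      obtain ⟨e1l, e1r⟩ := abs_le.1 (hB1 t ht)
      obtain ⟨e5l, e5r⟩ := abs_le.1 (hB5 t ht)
      obtain ⟨e8l, e8r⟩ := abs_le.1 (hB8 t ht)
      obtain ⟨e10l, e10r⟩ := abs_le.1 (hB10 t ht)
      show |(-1) * s t 1 + (-2/3) * s t 5 + (-1) * s t 8 + (-4/9) * s t 10| ≤ (C1 + C5 + C8 + C10) * Real.exp (-γ * t)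
      rw [abs_le]
      constructor <;> linarith [mul_nonneg hC1 (Real.exp_pos (-γ * t)).le, mul_nonneg hC5 (Real.exp_pos (-γ * t)).le, mul_nonneg hC8 (Real.exp_pos (-γ * t)).le, mul_nonneg hC10 (Real.exp_pos (-γ * t)).le])
    have hd6 : ∀ t, HasDerivAt (fun τ => s τ 6)
        ((-3) * s t 6 + (fun τ : ℝ => (-1/3) * s t 2 + (-4/9) * s t 4 + (1/3) * s t 7 + (-8/27) * s t 9) t) t := by
      intro t
      have h := hcomp 6 t
      rw [hrow6] at h
      convert h using 1
      ring
    obtain ⟨C6, hC6, hB6⟩ := decay_aux (a := -3) (K := C2 + C4 + C7 + C9) hγ0 (by linarith)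
      (by linarith) hd6 (((((continuous_const).mul (hscont 2)).add ((continuous_const).mul (hscont 4))).add ((continuous_const).mul (hscont 7))).add ((continuous_const).mul (hscont 9))) (fun t ht => by
      obtain ⟨e2l, e2r⟩ := abs_le.1 (hB2 t ht)
      obtain ⟨e4l, e4r⟩ := abs_le.1 (hB4 t ht)
      obtain ⟨e7l, e7r⟩ := abs_le.1 (hB7 t ht)
      obtain ⟨e9l, e9r⟩ := abs_le.1 (hB9 t ht)
      show |(-1/3) * s t 2 + (-4/9) * s t 4 + (1/3) * s t 7 + (-8/27) * s t 9| ≤ (C2 + C4 + C7 + C9) * Real.exp (-γ * t)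
      rw [abs_le]
      constructor <;> linarith [mul_nonneg hC2 (Real.exp_pos (-γ * t)).le, mul_nonneg hC4 (Real.exp_pos (-γ * t)).le, mul_nonneg hC7 (Real.exp_pos (-γ * t)).le, mul_nonneg hC9 (Real.exp_pos (-γ * t)).le])
    refine ⟨C0 + C1 + C2 + C3 + C4 + C5 + C6 + C7 + C8 + C9 + C10 + C11, by linarith, fun t ht => ?_⟩
    have hE := (Real.exp_pos (-γ * t)).le
    rw [pi_norm_le_iff_of_nonneg (by positivity)]
    intro i
    fin_cases i <;> rw [Real.norm_eq_abs] <;>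
      [exact (hB0 t ht).trans (by linarith [mul_nonneg hC0 hE, mul_nonneg hC1 hE, mul_nonneg hC2 hE, mul_nonneg hC3 hE, mul_nonneg hC4 hE, mul_nonneg hC5 hE, mul_nonneg hC6 hE, mul_nonneg hC7 hE, mul_nonneg hC8 hE, mul_nonneg hC9 hE, mul_nonneg hC10 hE, mul_nonneg hC11 hE]);
       exact (hB1 t ht).trans (by linarith [mul_nonneg hC0 hE, mul_nonneg hC1 hE, mul_nonneg hC2 hE, mul_nonneg hC3 hE, mul_nonneg hC4 hE, mul_nonneg hC5 hE, mul_nonneg hC6 hE, mul_nonneg hC7 hE, mul_nonneg hC8 hE, mul_nonneg hC9 hE, mul_nonneg hC10 hE, mul_nonneg hC11 hE]);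
       exact (hB2 t ht).trans (by linarith [mul_nonneg hC0 hE, mul_nonneg hC1 hE, mul_nonneg hC2 hE, mul_nonneg hC3 hE, mul_nonneg hC4 hE, mul_nonneg hC5 hE, mul_nonneg hC6 hE, mul_nonneg hC7 hE, mul_nonneg hC8 hE, mul_nonneg hC9 hE, mul_nonneg hC10 hE, mul_nonneg hC11 hE]);
       exact (hB3 t ht).trans (by linarith [mul_nonneg hC0 hE, mul_nonneg hC1 hE, mul_nonneg hC2 hE, mul_nonneg hC3 hE, mul_nonneg hC4 hE, mul_nonneg hC5 hE, mul_nonneg hC6 hE, mul_nonneg hC7 hE, mul_nonneg hC8 hE, mul_nonneg hC9 hE, mul_nonneg hC10 hE, mul_nonneg hC11 hE]);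
       exact (hB4 t ht).trans (by linarith [mul_nonneg hC0 hE, mul_nonneg hC1 hE, mul_nonneg hC2 hE, mul_nonneg hC3 hE, mul_nonneg hC4 hE, mul_nonneg hC5 hE, mul_nonneg hC6 hE, mul_nonneg hC7 hE, mul_nonneg hC8 hE, mul_nonneg hC9 hE, mul_nonneg hC10 hE, mul_nonneg hC11 hE]);
       exact (hB5 t ht).trans (by linarith [mul_nonneg hC0 hE, mul_nonneg hC1 hE, mul_nonneg hC2 hE, mul_nonneg hC3 hE, mul_nonneg hC4 hE, mul_nonneg hC5 hE, mul_nonneg hC6 hE, mul_nonneg hC7 hE, mul_nonneg hC8 hE, mul_nonneg hC9 hE, mul_nonneg hC10 hE, mul_nonneg hC11 hE]);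
       exact (hB6 t ht).trans (by linarith [mul_nonneg hC0 hE, mul_nonneg hC1 hE, mul_nonneg hC2 hE, mul_nonneg hC3 hE, mul_nonneg hC4 hE, mul_nonneg hC5 hE, mul_nonneg hC6 hE, mul_nonneg hC7 hE, mul_nonneg hC8 hE, mul_nonneg hC9 hE, mul_nonneg hC10 hE, mul_nonneg hC11 hE]);
       exact (hB7 t ht).trans (by linarith [mul_nonneg hC0 hE, mul_nonneg hC1 hE, mul_nonneg hC2 hE, mul_nonneg hC3 hE, mul_nonneg hC4 hE, mul_nonneg hC5 hE, mul_nonneg hC6 hE, mul_nonneg hC7 hE, mul_nonneg hC8 hE, mul_nonneg hC9 hE, mul_nonneg hC10 hE, mul_nonneg hC11 hE]);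
       exact (hB8 t ht).trans (by linarith [mul_nonneg hC0 hE, mul_nonneg hC1 hE, mul_nonneg hC2 hE, mul_nonneg hC3 hE, mul_nonneg hC4 hE, mul_nonneg hC5 hE, mul_nonneg hC6 hE, mul_nonneg hC7 hE, mul_nonneg hC8 hE, mul_nonneg hC9 hE, mul_nonneg hC10 hE, mul_nonneg hC11 hE]);
       exact (hB9 t ht).trans (by linarith [mul_nonneg hC0 hE, mul_nonneg hC1 hE, mul_nonneg hC2 hE, mul_nonneg hC3 hE, mul_nonneg hC4 hE, mul_nonneg hC5 hE, mul_nonneg hC6 hE, mul_nonneg hC7 hE, mul_nonneg hC8 hE, mul_nonneg hC9 hE, mul_nonneg hC10 hE, mul_nonneg hC11 hE]);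
       exact (hB10 t ht).trans (by linarith [mul_nonneg hC0 hE, mul_nonneg hC1 hE, mul_nonneg hC2 hE, mul_nonneg hC3 hE, mul_nonneg hC4 hE, mul_nonneg hC5 hE, mul_nonneg hC6 hE, mul_nonneg hC7 hE, mul_nonneg hC8 hE, mul_nonneg hC9 hE, mul_nonneg hC10 hE, mul_nonneg hC11 hE]);
       exact (hB11 t ht).trans (by linarith [mul_nonneg hC0 hE, mul_nonneg hC1 hE, mul_nonneg hC2 hE, mul_nonneg hC3 hE, mul_nonneg hC4 hE, mul_nonneg hC5 hE, mul_nonneg hC6 hE, mul_nonneg hC7 hE, mul_nonneg hC8 hE, mul_nonneg hC9 hE, mul_nonneg hC10 hE, mul_nonneg hC11 hE])]
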